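/- If S is a set of n points in the plane (or on a circle) of diameter 1 all lying on a circle of radius strictly greater than 1/√3, then at most one pair of points of S is at distance exactly 1 (i.e., the number of diameter pairs is at most 1). -/

import Mathlib

set_option maxHeartbeats 1000000

lemma cross_sq (a0 a1 b0 b1 : ℝ) :
    (a0*b0+a1*b1)^2 + (a0*b1 - a1*b0)^2 = (a0^2+a1^2)*(b0^2+b1^2) := by ring

lemma cross_mul (a0 a1 b0 b1 c0 c1 d0 d1 : ℝ) :
    (a0*b1 - a1*b0)*(c0*d1 - c1*d0)
      = (a0*c0+a1*c1)*(b0*d0+b1*d1) - (a0*d0+a1*d1)*(b0*c0+b1*c1) := by ring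

lemma lemL (R u0 u1 v0 v1 p0 p1 : ℝ) (hR : 1/3 < R)
    (hu : u0^2+u1^2 = R) (hv : v0^2+v1^2 = R) (hp : p0^2+p1^2 = R)
    (huv : u0*v0+u1*v1 = R - 1/2) (hup : u0*p0+u1*p1 = R - 1/2)
    (hvp : R - 1/2 ≤ v0*p0+v1*p1) : p0 = v0 ∧ p1 = v1 := by
  have e1 : (u0*v1 - u1*v0)^2 = R*R - (R-1/2)^2 := by
    have := cross_sq u0 u1 v0 v1
    rw [huv, hu, hv] at this; linarith
  have e2 : (u0*p1 - u1*p0)^2 = R*R - (R-1/2)^2 := by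
    have := cross_sq u0 u1 p0 p1
    rw [hup, hu, hp] at this; linarith
  have e3 : (u0*v1 - u1*v0)*(u0*p1 - u1*p0) = R*(v0*p0+v1*p1) - (R-1/2)^2 := by
    linear_combination cross_mul u0 u1 v0 v1 u0 u1 p0 p1 + (v0*p0+v1*p1)*hu
      - (u0*v0+u1*v1)*hup - (R-1/2)*huv
  have h4 : (R*(v0*p0+v1*p1) - (R-1/2)^2)^2 = (R*R - (R-1/2)^2)^2 := by
    calc (R*(v0*p0+v1*p1) - (R-1/2)^2)^2
        = ((u0*v1 - u1*v0)*(u0*p1 - u1*p0))^2 := by rw [e3]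
      _ = (u0*v1 - u1*v0)^2 * (u0*p1 - u1*p0)^2 := by ring
      _ = (R*R - (R-1/2)^2)^2 := by rw [e1, e2]; ring
  have h5 : (R*((v0*p0+v1*p1) - R)) * (R*(v0*p0+v1*p1) + R*R - 2*(R-1/2)^2) = 0 := by
    linear_combination h4
  rcases mul_eq_zero.mp h5 with h6 | h6
  · have hR0 : R ≠ 0 := by intro h; rw [h] at hR; norm_num at hR
    have hsR : v0*p0+v1*p1 = R := by
      rcases mul_eq_zero.mp h6 with h | h
      · exact absurd h hR0
      · linarith
    have hzero : (p0 - v0)^2 + (p1 - v1)^2 = 0 := by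
      linear_combination hp + hv - 2*hsR
    have h01 : p0 - v0 = 0 := by
      have h := sq_nonneg (p1 - v1)
      have h2 : (p0 - v0)^2 = 0 := le_antisymm (by linarith) (sq_nonneg _)
      exact sq_eq_zero_iff.mp h2
    have h02 : p1 - v1 = 0 := by
      have h := sq_nonneg (p0 - v0)
      have h2 : (p1 - v1)^2 = 0 := le_antisymm (by linarith) (sq_nonneg _)
      exact sq_eq_zero_iff.mp h2
    exact ⟨by linarith, by linarith⟩
  · exfalso
    have : R * (R - 1/2) ≤ R * (v0*p0+v1*p1) :=
      mul_le_mul_of_nonneg_left hvp (by linarith)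
    nlinarith [this, h6]
set_option maxHeartbeats 800000

lemma core (R x y x' y' : ℝ) (hR : 1/3 < R)
    (hy : y^2 = (4*R-1)*(R - x^2)) (hy' : y'^2 = (4*R-1)*(R - x'^2))
    (h1 : 2*(R-1/2) < x + y) (h2 : 2*(R-1/2) < y - x)
    (h1' : 2*(R-1/2) ≤ x' + y') (h2' : 2*(R-1/2) ≤ y' - x') :
    (4*R-1)*(R-1/2) < (4*R-1)*(x*x') + y*y' := by
  have hm : (0:ℝ) < 4*R-1 := by linarith
  -- y > 0
  have hy0 : 0 < y := by
    by_contra h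
    push_neg at h
    have ha : 0 < y - 2*(R-1/2) - x := by linarith
    have hb : 0 < y - 2*(R-1/2) + x := by linarith
    have hab := mul_pos ha hb
    have hyy : 0 ≤ (-y) * (y - 2*(R-1/2)) := mul_nonneg (by linarith) (by linarith)
    have ht : R < 1/2 := by linarith
    nlinarith [hy, hab, hyy, mul_nonneg (mul_nonneg (by linarith : (0:ℝ) ≤ 1 - 2*R) (by linarith : (0:ℝ) ≤ -y)) (by linarith : (0:ℝ) ≤ y - 2*(R-1/2))]
  have hy'0 : 0 < y' := by
    by_contra h
    push_neg at h
    have ha : 0 ≤ y' - 2*(R-1/2) - x' := by linarith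
    have hb : 0 ≤ y' - 2*(R-1/2) + x' := by linarith
    have hab := mul_nonneg ha hb
    have hyy : 0 ≤ (-y') * (y' - 2*(R-1/2)) := mul_nonneg (by linarith) (by linarith)
    have ht : R ≤ 1/2 := by linarith
    nlinarith [hy', hab, hyy, mul_nonneg (mul_nonneg (by linarith : (0:ℝ) ≤ 1 - 2*R) (by linarith : (0:ℝ) ≤ -y')) (by linarith : (0:ℝ) ≤ y' - 2*(R-1/2))]
  -- x < 1/2
  have hxu : x < 1/2 := by
    by_contra h
    push_neg at h
    have hpos : 0 < 2*(R-1/2) + x := by linarith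
    have hygt : 2*(R-1/2) + x < y := by linarith
    have := mul_pos (by linarith : 0 < y - (2*(R-1/2)+x)) (by linarith : 0 < y + (2*(R-1/2)+x))
    nlinarith [hy, this, mul_nonneg (by linarith : (0:ℝ) ≤ x - 1/2) (by nlinarith [mul_nonneg (by linarith : (0:ℝ) ≤ R) (by linarith : (0:ℝ) ≤ x - 1/2)] : (0:ℝ) ≤ 4*R*x + 6*R - 2)]
  have hxl : -(1/2) < x := by
    by_contra h
    push_neg at h
    have hpos : 0 < 2*(R-1/2) - x := by linarith
    have hygt : 2*(R-1/2) - x < y := by linarith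
    have := mul_pos (by linarith : 0 < y - (2*(R-1/2)-x)) (by linarith : 0 < y + (2*(R-1/2)-x))
    nlinarith [hy, this, mul_nonneg (by linarith : (0:ℝ) ≤ -x - 1/2) (by nlinarith [mul_nonneg (by linarith : (0:ℝ) ≤ R) (by linarith : (0:ℝ) ≤ -x - 1/2)] : (0:ℝ) ≤ -(4*R*x) + 6*R - 2)]
  have hx'u : x' ≤ 1/2 := by
    by_contra h
    push_neg at h
    have hpos : 0 < 2*(R-1/2) + x' := by linarith
    have hygt : 2*(R-1/2) + x' ≤ y' := by linarith
    have := mul_nonneg (by linarith : 0 ≤ y' - (2*(R-1/2)+x')) (by linarith : 0 ≤ y' + (2*(R-1/2)+x'))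
    nlinarith [hy', this, mul_pos (by linarith : (0:ℝ) < x' - 1/2) (by nlinarith [mul_nonneg (by linarith : (0:ℝ) ≤ R) (by linarith : (0:ℝ) ≤ x' - 1/2)] : (0:ℝ) < 4*R*x' + 6*R - 2)]
  have hx'l : -(1/2) ≤ x' := by
    by_contra h
    push_neg at h
    have hpos : 0 < 2*(R-1/2) - x' := by linarith
    have hygt : 2*(R-1/2) - x' ≤ y' := by linarith
    have := mul_nonneg (by linarith : 0 ≤ y' - (2*(R-1/2)-x')) (by linarith : 0 ≤ y' + (2*(R-1/2)-x'))
    nlinarith [hy', this, mul_pos (by linarith : (0:ℝ) < -x' - 1/2) (by nlinarith [mul_nonneg (by linarith : (0:ℝ) ≤ R) (by linarith : (0:ℝ) ≤ -x' - 1/2)] : (0:ℝ) < -(4*R*x') + 6*R - 2)]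
  -- main case split
  rcases le_or_gt (R - 1/2 - x*x') 0 with hcase | hcase
  · have h8 : (4*R-1)*((R-1/2) - x*x') ≤ 0 :=
      mul_nonpos_of_nonneg_of_nonpos (by linarith) hcase
    have h9 := mul_pos hy0 hy'0
    nlinarith [h8, h9]
  · -- C > 0
    have hC : 0 < 1 - (x - x')^2 := by nlinarith [mul_pos (by linarith : (0:ℝ) < 1 - (x-x')) (by linarith : (0:ℝ) < 1 + (x-x'))]
    have hW1 : 0 ≤ 1 - 2*x*(x-x') := by
      nlinarith [mul_nonneg (by linarith : (0:ℝ) ≤ 1 - 2*x) (by linarith : (0:ℝ) ≤ 1 + (x-x')),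
                 mul_nonneg (by linarith : (0:ℝ) ≤ 1 + 2*x) (by linarith : (0:ℝ) ≤ 1 - (x-x'))]
    have hW2 : 0 ≤ 1 + 2*x'*(x-x') := by
      nlinarith [mul_nonneg (by linarith : (0:ℝ) ≤ 1 - 2*x') (by linarith : (0:ℝ) ≤ 1 - (x-x')),
                 mul_nonneg (by linarith : (0:ℝ) ≤ 1 + 2*x') (by linarith : (0:ℝ) ≤ 1 + (x-x'))]
    have hW : 0 ≤ (1 - 2*x*(x-x'))*(1 + 2*x'*(x-x')) := mul_nonneg hW1 hW2
    have hP : 0 < (R - x^2)*(R - x'^2) - ((R-1/2) - x*x')^2 := by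
      have hid : (R - x^2)*(R - x'^2) - ((R-1/2) - x*x')^2
          = (R - 1/2 - x*x')*(1-(x-x')^2)
            + (1 - 2*x*(x-x'))*(1 + 2*x'*(x-x'))/4 := by ring
      rw [hid]
      nlinarith [mul_pos hcase hC, hW]
    have h9 : (y*y')^2 = (4*R-1)^2 * ((R - x^2)*(R - x'^2)) := by
      rw [mul_pow, hy, hy']; ring
    have hB : 0 < (4*R-1)*((R-1/2) - x*x') := mul_pos hm hcase
    have hdiff : (y*y')^2 - ((4*R-1)*((R-1/2)-x*x'))^2
        = ((4*R-1)*(4*R-1)) * ((R - x^2)*(R - x'^2) - ((R-1/2) - x*x')^2) := by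
      linear_combination h9
    have hsq : ((4*R-1)*((R-1/2) - x*x'))^2 < (y*y')^2 := by
      have h10 := mul_pos (mul_pos hm hm) hP
      linarith [hdiff, h10]
    have hAY : (4*R-1)*((R-1/2)-x*x') < y*y' :=
      lt_of_pow_lt_pow_left₀ 2 (le_of_lt (mul_pos hy0 hy'0)) hsq
    linarith [hAY]


lemma on_circle_coords (R e0 e1 f0 f1 w0 w1 : ℝ) (hR : 0 < R)
    (he : e0^2+e1^2 = 1) (hf : f0^2+f1^2 = 4*R-1) (hef : e0*f0+e1*f1 = 0)
    (hw : w0^2+w1^2 = R) :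
    (w0*f0+w1*f1)^2 = (4*R-1)*(R - (w0*e0+w1*e1)^2) := by
  have c1 : (w0*e0+w1*e1)^2 + (w0*e1 - w1*e0)^2 = R := by
    have := cross_sq w0 w1 e0 e1; rw [hw, he] at this; linarith
  have c2 : (w0*f0+w1*f1)^2 + (w0*f1 - w1*f0)^2 = R*(4*R-1) := by
    have := cross_sq w0 w1 f0 f1; rw [hw, hf] at this; linarith
  have c3 : (w0*e1 - w1*e0)*(w0*f1 - w1*f0) = -((w0*e0+w1*e1)*(w0*f0+w1*f1)) := by
    linear_combination cross_mul w0 w1 e0 e1 w0 w1 f0 f1 + (w0^2+w1^2)*hef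
  have h4 : ((w0*e0+w1*e1)*(w0*f0+w1*f1))^2
      = (R - (w0*e0+w1*e1)^2) * (R*(4*R-1) - (w0*f0+w1*f1)^2) := by
    calc ((w0*e0+w1*e1)*(w0*f0+w1*f1))^2
        = ((w0*e1 - w1*e0)*(w0*f1 - w1*f0))^2 := by rw [c3]; ring
      _ = (w0*e1 - w1*e0)^2 * (w0*f1 - w1*f0)^2 := by ring
      _ = (R - (w0*e0+w1*e1)^2) * (R*(4*R-1) - (w0*f0+w1*f1)^2) := by
          rw [show (w0*e1 - w1*e0)^2 = R - (w0*e0+w1*e1)^2 by linarith,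
              show (w0*f1 - w1*f0)^2 = R*(4*R-1) - (w0*f0+w1*f1)^2 by linarith]
  have h5 : R * ((w0*f0+w1*f1)^2) = R * ((4*R-1)*(R - (w0*e0+w1*e1)^2)) := by
    linear_combination h4
  exact mul_left_cancel₀ (ne_of_gt hR) h5

lemma inner_rep (R e0 e1 f0 f1 w0 w1 z0 z1 : ℝ)
    (he : e0^2+e1^2 = 1) (hf : f0^2+f1^2 = 4*R-1) (hef : e0*f0+e1*f1 = 0) :
    (4*R-1)*(w0*z0+w1*z1)
      = (4*R-1)*((w0*e0+w1*e1)*(z0*e0+z1*e1)) + (w0*f0+w1*f1)*(z0*f0+z1*f1) := by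
  have hD : (e0*f1 - e1*f0)^2 = 4*R-1 := by
    have := cross_sq e0 e1 f0 f1; rw [he, hf, hef] at this; linarith
  have hwD : (w0*e1 - w1*e0) * (e0*f1 - e1*f0) = -(w0*f0+w1*f1) := by
    linear_combination cross_mul w0 w1 e0 e1 e0 e1 f0 f1 - (w0*f0+w1*f1)*he + (w0*e0+w1*e1)*hef
  have hzD : (z0*e1 - z1*e0) * (e0*f1 - e1*f0) = -(z0*f0+z1*f1) := by
    linear_combination cross_mul z0 z1 e0 e1 e0 e1 f0 f1 - (z0*f0+z1*f1)*he + (z0*e0+z1*e1)*hef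
  have hce : (w0*e1 - w1*e0)*(z0*e1 - z1*e0)
      = (w0*z0+w1*z1) - (w0*e0+w1*e1)*(z0*e0+z1*e1) := by
    linear_combination cross_mul w0 w1 e0 e1 z0 z1 e0 e1 + (w0*z0+w1*z1)*he
  have key : (4*R-1)*((w0*z0+w1*z1) - (w0*e0+w1*e1)*(z0*e0+z1*e1))
      = (w0*f0+w1*f1)*(z0*f0+z1*f1) := by
    calc (4*R-1)*((w0*z0+w1*z1) - (w0*e0+w1*e1)*(z0*e0+z1*e1))
        = (e0*f1 - e1*f0)^2 * ((w0*e1 - w1*e0)*(z0*e1 - z1*e0)) := by rw [hD, hce]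
      _ = ((w0*e1 - w1*e0)*(e0*f1 - e1*f0)) * ((z0*e1 - z1*e0)*(e0*f1 - e1*f0)) := by ring
      _ = (-(w0*f0+w1*f1)) * (-(z0*f0+z1*f1)) := by rw [hwD, hzD]
      _ = (w0*f0+w1*f1)*(z0*f0+z1*f1) := by ring
  linarith [key]

lemma master (R u0 u1 v0 v1 w0 w1 z0 z1 : ℝ) (hR : 1/3 < R)
    (hu : u0^2+u1^2 = R) (hv : v0^2+v1^2 = R) (hw : w0^2+w1^2 = R) (hz : z0^2+z1^2 = R)
    (huv : u0*v0+u1*v1 = R - 1/2) (hwz : w0*z0+w1*z1 = R - 1/2)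
    (huw : R - 1/2 ≤ u0*w0+u1*w1) (huz : R - 1/2 ≤ u0*z0+u1*z1)
    (hvw : R - 1/2 ≤ v0*w0+v1*w1) (hvz : R - 1/2 ≤ v0*z0+v1*z1) :
    (w0 = u0 ∧ w1 = u1 ∧ z0 = v0 ∧ z1 = v1) ∨
    (w0 = v0 ∧ w1 = v1 ∧ z0 = u0 ∧ z1 = u1) := by
  have hvu : v0*u0+v1*u1 = R - 1/2 := by linear_combination huv
  by_cases hcase1 : u0*w0+u1*w1 = R - 1/2
  · -- w = v
    obtain ⟨hw0, hw1⟩ := lemL R u0 u1 v0 v1 w0 w1 hR hu hv hw huv hcase1 hvw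
    -- z = u
    have hvz' : v0*z0+v1*z1 = R - 1/2 := by
      rw [hw0, hw1] at hwz; exact hwz
    obtain ⟨hz0, hz1⟩ := lemL R v0 v1 u0 u1 z0 z1 hR hv hu hz hvu hvz' huz
    exact Or.inr ⟨hw0, hw1, hz0, hz1⟩
  · by_cases hcase2 : v0*w0+v1*w1 = R - 1/2
    · -- w = u
      obtain ⟨hw0, hw1⟩ := lemL R v0 v1 u0 u1 w0 w1 hR hv hu hw hvu hcase2 huw
      have huz' : u0*z0+u1*z1 = R - 1/2 := by
        rw [hw0, hw1] at hwz; exact hwz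
      obtain ⟨hz0, hz1⟩ := lemL R u0 u1 v0 v1 z0 z1 hR hu hv hz huv huz' hvz
      exact Or.inl ⟨hw0, hw1, hz0, hz1⟩
    · exfalso
      have hsuw : R - 1/2 < u0*w0+u1*w1 := lt_of_le_of_ne huw (Ne.symm hcase1)
      have hsvw : R - 1/2 < v0*w0+v1*w1 := lt_of_le_of_ne hvw (Ne.symm hcase2)
      have hR0 : (0:ℝ) < R := by linarith
      set e0 := u0 - v0 with he0
      set e1 := u1 - v1 with he1
      set f0 := u0 + v0 with hf0
      set f1 := u1 + v1 with hf1
      have he : e0^2+e1^2 = 1 := by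
        rw [he0, he1]; linear_combination hu + hv - 2*huv
      have hf : f0^2+f1^2 = 4*R-1 := by
        rw [hf0, hf1]; linear_combination hu + hv + 2*huv
      have hef : e0*f0+e1*f1 = 0 := by
        rw [he0, he1, hf0, hf1]; linear_combination hu - hv
      have hyw := on_circle_coords R e0 e1 f0 f1 w0 w1 hR0 he hf hef hw
      have hyz := on_circle_coords R e0 e1 f0 f1 z0 z1 hR0 he hf hef hz
      have hxyw : (w0*e0+w1*e1) + (w0*f0+w1*f1) = 2*(u0*w0+u1*w1) := by
        rw [he0, he1, hf0, hf1]; ring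
      have hyxw : (w0*f0+w1*f1) - (w0*e0+w1*e1) = 2*(v0*w0+v1*w1) := by
        rw [he0, he1, hf0, hf1]; ring
      have hxyz : (z0*e0+z1*e1) + (z0*f0+z1*f1) = 2*(u0*z0+u1*z1) := by
        rw [he0, he1, hf0, hf1]; ring
      have hyxz : (z0*f0+z1*f1) - (z0*e0+z1*e1) = 2*(v0*z0+v1*z1) := by
        rw [he0, he1, hf0, hf1]; ring
      have hcore := core R (w0*e0+w1*e1) (w0*f0+w1*f1) (z0*e0+z1*e1) (z0*f0+z1*f1)
        hR hyw hyz (by linarith) (by linarith) (by linarith) (by linarith)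
      have hrep := inner_rep R e0 e1 f0 f1 w0 w1 z0 z1 he hf hef
      rw [hwz] at hrep
      linarith [hcore, hrep]

lemma distsq (p q : EuclideanSpace ℝ (Fin 2)) :
    dist p q ^ 2 = (p 0 - q 0)^2 + (p 1 - q 1)^2 := by
  rw [EuclideanSpace.dist_eq, Real.sq_sqrt (by positivity)]
  simp [Fin.sum_univ_two, Real.dist_eq, sq_abs]



open Classical in
/-- Number of ordered pairs of distinct points of `S` at distance exactly `1`
(twice the number of unordered such pairs). -/
noncomputable def unitPairs {d : ℕ} (S : Finset (EuclideanSpace ℝ (Fin d))) : ℕ :=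
  (S.offDiag.filter fun p => dist p.1 p.2 = 1).card

/-- A set of diameter 1 on a circle of radius greater than `1/√3` has at most one
diameter pair. -/
theorem stmt_0 (S : Finset (EuclideanSpace ℝ (Fin 2))) (c : EuclideanSpace ℝ (Fin 2))
    (r : ℝ) (hr : r > 1 / Real.sqrt 3)
    (hcirc : ∀ x ∈ S, dist x c = r)
    (hdiam : ∀ x ∈ S, ∀ y ∈ S, dist x y ≤ 1)
    (hattain : ∃ x ∈ S, ∃ y ∈ S, dist x y = 1) :
    unitPairs S ≤ 2 := by
  classical
  obtain ⟨a, haS, b, hbS, hab⟩ := hattain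
  have hpos : (0:ℝ) < 1/Real.sqrt 3 := by positivity
  have hR : 1/3 < r^2 := by
    have h2 := mul_self_lt_mul_self hpos.le hr
    have h3 : (1/Real.sqrt 3)*(1/Real.sqrt 3) = 1/3 := by
      rw [div_mul_div_comm, one_mul, Real.mul_self_sqrt (by norm_num : (0:ℝ) ≤ 3)]
    nlinarith [h2, h3]
  have hnorm : ∀ p ∈ S, (p 0 - c 0)^2 + (p 1 - c 1)^2 = r^2 := by
    intro p hp
    rw [← distsq, hcirc p hp]
  have hinnerle : ∀ p ∈ S, ∀ q ∈ S,
      r^2 - 1/2 ≤ (p 0 - c 0)*(q 0 - c 0) + (p 1 - c 1)*(q 1 - c 1) := by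
    intro p hp q hq
    have hd := hdiam p hp q hq
    have hd0 := dist_nonneg (x := p) (y := q)
    have hd2 : (p 0 - q 0)^2 + (p 1 - q 1)^2 ≤ 1 := by
      rw [← distsq]; nlinarith [hd, hd0]
    have h1 := hnorm p hp
    have h2 := hnorm q hq
    nlinarith [hd2, h1, h2]
  have hinnereq : ∀ p ∈ S, ∀ q ∈ S, dist p q = 1 →
      (p 0 - c 0)*(q 0 - c 0) + (p 1 - c 1)*(q 1 - c 1) = r^2 - 1/2 := by
    intro p hp q hq hpq
    have hd2 : (p 0 - q 0)^2 + (p 1 - q 1)^2 = 1 := by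
      rw [← distsq, hpq]; norm_num
    have h1 := hnorm p hp
    have h2 := hnorm q hq
    linear_combination (h1 + h2 - hd2)/2
  have key : ∀ x ∈ S, ∀ y ∈ S, dist x y = 1 →
      (x = a ∧ y = b) ∨ (x = b ∧ y = a) := by
    intro x hxS y hyS hxy
    have hmaster := master (r^2) (a 0 - c 0) (a 1 - c 1) (b 0 - c 0) (b 1 - c 1)
      (x 0 - c 0) (x 1 - c 1) (y 0 - c 0) (y 1 - c 1) hR
      (hnorm a haS) (hnorm b hbS) (hnorm x hxS) (hnorm y hyS)
      (hinnereq a haS b hbS hab) (hinnereq x hxS y hyS hxy)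
      (hinnerle a haS x hxS) (hinnerle a haS y hyS)
      (hinnerle b hbS x hxS) (hinnerle b hbS y hyS)
    rcases hmaster with ⟨e1, e2, e3, e4⟩ | ⟨e1, e2, e3, e4⟩
    · left
      constructor
      · ext i
        fin_cases i
        · show x 0 = a 0; linarith
        · show x 1 = a 1; linarith
      · ext i
        fin_cases i
        · show y 0 = b 0; linarith
        · show y 1 = b 1; linarith
    · right
      constructor
      · ext i
        fin_cases i
        · show x 0 = b 0; linarith
        · show x 1 = b 1; linarith
      · ext i
        fin_cases i
        · show y 0 = a 0; linarith
        · show y 1 = a 1; linarith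
  have hsub : S.offDiag.filter (fun p => dist p.1 p.2 = 1) ⊆ {(a,b),(b,a)} := by
    intro p hp
    simp only [Finset.mem_filter, Finset.mem_offDiag] at hp
    obtain ⟨⟨hp1, hp2, _⟩, hpd⟩ := hp
    simp only [Finset.mem_insert, Finset.mem_singleton]
    rcases key p.1 hp1 p.2 hp2 hpd with ⟨h1, h2⟩ | ⟨h1, h2⟩
    · left; exact Prod.ext h1 h2
    · right; exact Prod.ext h1 h2
  unfold unitPairs
  calc (S.offDiag.filter fun p => dist p.1 p.2 = 1).card
      ≤ ({(a,b),(b,a)} : Finset (EuclideanSpace ℝ (Fin 2) × EuclideanSpace ℝ (Fin 2))).card :=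
        Finset.card_le_card hsub
    _ ≤ 2 := by
        apply le_trans (Finset.card_insert_le _ _)
        simp
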